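/- Let N ≥ 1 and let 𝒳_i (i ∈ {1, …, N}) be defined as below. Then for every x in Λ = {x ∈ ℝ : |tr 𝒳_1(x)| < 2}, ∑_{i=1}^{N−1} |[𝒳_i(x)]_{2,1}| / α_{i−1} + 2 |[𝒳_N(x)]_{2,1}| / α_{N−1} = |tr 𝒳_1′(x)|, where ′ denotes the derivative in x of the (polynomial) matrix entries and [M]_{2,1} denotes the (2,1) entry of a matrix M. -/

import Mathlib

open Filter Topology

noncomputable section

abbrev Mat2 := Matrix (Fin 2) (Fin 2) ℝ

/-- The transfer matrix `𝔅_j(x)` built from (N-periodic) sequences `(α_n)`, `(β_n)`. -/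
def frakB (α β : ℤ → ℝ) (j : ℤ) (x : ℝ) : Mat2 :=
  !![0, 1; -(α (j - 1)) / α j, (x - β j) / α j]

/-- Product in decreasing index order with integer starting point:
`prodDZ C n0 len = C (n0+len-1) ⋯ C n0`. -/
def prodDZ (C : ℤ → Mat2) (n0 : ℤ) : ℕ → Mat2
  | 0 => 1
  | (len + 1) => C (n0 + len) * prodDZ C n0 len

/-- The matrix `𝒞(x)`. -/
def Cmat (α β : ℤ → ℝ) (N : ℕ) (x : ℝ) : Mat2 :=
  !![0, -1; α ((N : ℤ) - 1) / α 0, -(2 * x - β 0) / α 0]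

/-- `𝒳_i(x) = (∏_{j=1}^{i−1} 𝔅_j(x)) · 𝒞(x) · (∏_{j=i}^{N−1} 𝔅_j(x))`. -/
def calX (α β : ℤ → ℝ) (N i : ℕ) (x : ℝ) : Mat2 :=
  prodDZ (fun j => frakB α β j x) 1 (i - 1) * Cmat α β N x *
    prodDZ (fun j => frakB α β j x) (i : ℤ) (N - i)

lemma prodDZ_bot (C : ℤ → Mat2) (n0 : ℤ) (len : ℕ) :
    prodDZ C n0 (len + 1) = prodDZ C (n0 + 1) len * C n0 := by
  induction len generalizing n0 with
  | zero => simp [prodDZ]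
  | succ m ih =>
    rw [show m + 1 + 1 = (m+1)+1 from rfl]
    rw [prodDZ, ih, ← mul_assoc, prodDZ]
    congr 2
    push_cast; ring_nf

lemma det_frakB (α β : ℤ → ℝ) (j : ℤ) (x : ℝ) (hα : ∀ n, 0 < α n) :
    (frakB α β j x).det = α (j-1) / α j := by
  simp [frakB, Matrix.det_fin_two_of]
  ring

lemma det_prodDZ (α β : ℤ → ℝ) (x : ℝ) (hα : ∀ n, 0 < α n) (n0 : ℤ) (len : ℕ) :
    (prodDZ (fun j => frakB α β j x) n0 len).det = α (n0 - 1) / α (n0 + len - 1) := by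
  induction len with
  | zero => simp [prodDZ, div_self (hα (n0-1)).ne']
  | succ m ih =>
    rw [prodDZ, Matrix.det_mul, det_frakB _ _ _ _ hα, ih]
    have h1 : (0:ℝ) < α (n0 + m - 1) := hα _
    have h2 : (0:ℝ) < α (n0 + m) := hα _
    rw [show n0 + (↑(m+1):ℤ) - 1 = n0 + m by push_cast; ring]
    field_simp

lemma det_Cmat (α β : ℤ → ℝ) (N : ℕ) (x : ℝ) :
    (Cmat α β N x).det = α ((N:ℤ) - 1) / α 0 := by
  simp [Cmat, Matrix.det_fin_two_of]

lemma det_calX_one (α β : ℤ → ℝ) (N : ℕ) (hN : 1 ≤ N) (x : ℝ) (hα : ∀ n, 0 < α n) :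
    (calX α β N 1 x).det = 1 := by
  rw [calX, Matrix.det_mul, Matrix.det_mul, det_prodDZ _ _ _ hα, det_prodDZ _ _ _ hα,
    det_Cmat]
  have h1 : (0:ℝ) < α 0 := hα _
  have h2 : (0:ℝ) < α ((N:ℤ) - 1) := hα _
  have e : (1:ℤ) + ↑(N - 1) - 1 = (N:ℤ) - 1 := by omega
  rw [show ((1:ℕ):ℤ) = (1:ℤ) by norm_num, e]
  norm_num
  field_simp

lemma conj_rel (α β : ℤ → ℝ) (N : ℕ) (x : ℝ) (m : ℕ) (h : m + 2 ≤ N) :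
    calX α β N (m+2) x * frakB α β ((m:ℤ)+1) x =
      frakB α β ((m:ℤ)+1) x * calX α β N (m+1) x := by
  have e1 : prodDZ (fun j => frakB α β j x) 1 (m+2-1) =
      frakB α β ((m:ℤ)+1) x * prodDZ (fun j => frakB α β j x) 1 m := by
    rw [show m+2-1 = m+1 from rfl, prodDZ]
    norm_num [add_comm]
  have e2 : prodDZ (fun j => frakB α β j x) ((m+1 : ℕ):ℤ) (N-(m+1)) =
      prodDZ (fun j => frakB α β j x) ((m+2 : ℕ):ℤ) (N-(m+2)) * frakB α β ((m:ℤ)+1) x := by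
    rw [show N-(m+1) = (N-(m+2))+1 by omega, prodDZ_bot]
    norm_num [show ((m:ℤ)+1+1) = (m:ℤ)+2 by ring]
  rw [calX, calX, e1, e2, show (m+1)-1 = m from rfl]
  simp only [mul_assoc]

lemma quad_pos (p q r v0 v1 : ℝ) (hd : q^2 - 4*p*r < 0) (hv : v0 ≠ 0 ∨ v1 ≠ 0) :
    0 < p * (p*v0^2 + q*v0*v1 + r*v1^2) := by
  rcases eq_or_ne v1 0 with h1 | h1
  · subst h1
    have hv0 : v0 ≠ 0 := hv.resolve_right (by simp)
    have hp : p ≠ 0 := by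
      intro h; rw [h] at hd; nlinarith [sq_nonneg q]
    have : 0 < p^2 * v0^2 := by positivity
    nlinarith
  · have h2 : 0 < (4*p*r - q^2) * v1^2 := by
      have : 0 < 4*p*r - q^2 := by linarith
      positivity
    nlinarith [sq_nonneg (2*p*v0 + q*v1)]

lemma conj_step (M M' B : Mat2) (hB : 0 < B.det) (h : M' * B = B * M)
    (hd : (Matrix.trace M)^2 < 4 * M.det) :
    Matrix.trace M' = Matrix.trace M ∧ M'.det = M.det ∧ 0 < M 1 0 * M' 1 0 := by
  have hdetB : B.det ≠ 0 := hB.ne'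
  have hdet : M'.det = M.det := by
    have h2 : M'.det * B.det = M.det * B.det := by
      rw [← Matrix.det_mul, h, Matrix.det_mul]; ring
    exact mul_right_cancel₀ hdetB h2
  have : Invertible B := B.invertibleOfIsUnitDet (isUnit_iff_ne_zero.mpr hdetB)
  have htr : Matrix.trace M' = Matrix.trace M := by
    have hM' : M' = B * M * ⅟B := by
      rw [← h, mul_assoc, mul_invOf_self, mul_one]
    rw [hM', Matrix.trace_mul_cycle, invOf_mul_self, one_mul]
  refine ⟨htr, hdet, ?_⟩
  have e00 := congrFun (congrFun h 0) 0
  have e10 := congrFun (congrFun h 1) 0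
  simp only [Matrix.mul_apply, Fin.sum_univ_two] at e00 e10
  have key : M' 1 0 * (B 0 0)^2 + (M' 1 1 - M' 0 0) * (B 0 0) * (B 1 0)
      + (-(M' 0 1)) * (B 1 0)^2 = B.det * M 1 0 := by
    rw [Matrix.det_fin_two]
    linear_combination (B 0 0) * e10 - (B 1 0) * e00
  have hd' : (M' 1 1 - M' 0 0)^2 - 4 * (M' 1 0) * (-(M' 0 1)) < 0 := by
    have h4 : (Matrix.trace M')^2 < 4 * M'.det := by rw [htr, hdet]; exact hd
    rw [Matrix.trace_fin_two, Matrix.det_fin_two] at h4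
    nlinarith
  have hv : B 0 0 ≠ 0 ∨ B 1 0 ≠ 0 := by
    by_contra hc
    push_neg at hc
    rw [Matrix.det_fin_two, hc.1, hc.2] at hdetB
    simp at hdetB
  have h3 := quad_pos (M' 1 0) (M' 1 1 - M' 0 0) (-(M' 0 1)) (B 0 0) (B 1 0) hd' hv
  rw [key] at h3
  have h5 : 0 < B.det * (M 1 0 * M' 1 0) := by nlinarith
  rcases mul_pos_iff.mp h5 with ⟨_, hh⟩ | ⟨hh, _⟩
  · exact hh
  · linarith

lemma entry_sq_pos (M : Mat2) (hd : (Matrix.trace M)^2 < 4 * M.det) :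
    0 < M 1 0 * M 1 0 := by
  rw [Matrix.trace_fin_two, Matrix.det_fin_two] at hd
  have hbc : M 0 1 * M 1 0 < 0 := by nlinarith [sq_nonneg (M 0 0 - M 1 1)]
  have hc : M 1 0 ≠ 0 := fun h => by rw [h, mul_zero] at hbc; exact lt_irrefl 0 hbc
  exact mul_self_pos.mpr hc

lemma chain (α β : ℤ → ℝ) (hα : ∀ n, 0 < α n) (N : ℕ) (x : ℝ)
    (hd1 : (Matrix.trace (calX α β N 1 x))^2 < 4 * (calX α β N 1 x).det) :
    ∀ k, k + 1 ≤ N → (Matrix.trace (calX α β N (k+1) x))^2 < 4 * (calX α β N (k+1) x).det ∧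
      0 < calX α β N 1 x 1 0 * calX α β N (k+1) x 1 0 := by
  intro k
  induction k with
  | zero => exact fun _ => ⟨hd1, entry_sq_pos _ hd1⟩
  | succ m ih =>
    intro hm
    obtain ⟨ihd, ihp⟩ := ih (by omega)
    have hdetB : 0 < (frakB α β ((m:ℤ)+1) x).det := by
      rw [det_frakB _ _ _ _ hα, show ((m:ℤ)+1-1) = (m:ℤ) by ring]
      exact div_pos (hα _) (hα _)
    obtain ⟨htr, hdet, hpos⟩ := conj_step _ _ _ hdetB (conj_rel α β N x m hm) ihd
    refine ⟨by rw [htr, hdet]; exact ihd, ?_⟩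
    have h6 : 0 < (calX α β N 1 x 1 0 * calX α β N (m+1) x 1 0) *
        (calX α β N (m+1) x 1 0 * calX α β N (m+2) x 1 0) := mul_pos ihp hpos
    have h7 : 0 < calX α β N (m+1) x 1 0 * calX α β N (m+1) x 1 0 :=
      mul_self_pos.mpr (fun hz => by rw [hz, mul_zero] at ihp; exact lt_irrefl 0 ihp)
    nlinarith [h6, h7]

def Bder (α : ℤ → ℝ) (j : ℤ) : Mat2 := !![0, 0; 0, 1 / α j]

def Tder (α β : ℤ → ℝ) (n0 : ℤ) (len : ℕ) (x : ℝ) : Mat2 :=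
  ∑ k ∈ Finset.range len,
    prodDZ (fun j => frakB α β j x) (n0 + k + 1) (len - 1 - k) * Bder α (n0 + k) *
      prodDZ (fun j => frakB α β j x) n0 k

lemma matmul_hasDerivAt (A B : ℝ → Mat2) (A₁ B₁ : Mat2) (x : ℝ)
    (hA : ∀ i j, HasDerivAt (fun y => A y i j) (A₁ i j) x)
    (hB : ∀ i j, HasDerivAt (fun y => B y i j) (B₁ i j) x) :
    ∀ i j, HasDerivAt (fun y => (A y * B y) i j) ((A₁ * B x + A x * B₁) i j) x := by
  intro i j
  have e1 : (fun y => (A y * B y) i j) = fun y => ∑ k : Fin 2, A y i k * B y k j := by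
    funext y; rw [Matrix.mul_apply]
  have e2 : (A₁ * B x + A x * B₁) i j = ∑ k : Fin 2, (A₁ i k * B x k j + A x i k * B₁ k j) := by
    simp [Matrix.mul_apply, Matrix.add_apply, Finset.sum_add_distrib]
  rw [e1, e2]
  exact HasDerivAt.fun_sum fun k _ => (hA i k).mul (hB k j)

lemma frakB_hasDerivAt (α β : ℤ → ℝ) (n : ℤ) (x : ℝ) :
    ∀ i j, HasDerivAt (fun y => frakB α β n y i j) (Bder α n i j) x := by
  intro i j
  fin_cases i <;> fin_cases j <;>
    simp only [frakB, Bder, Matrix.cons_val', Matrix.cons_val_zero, Matrix.cons_val_one,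
      Matrix.head_cons, Matrix.head_fin_const, Matrix.empty_val', Matrix.cons_val_fin_one,
      Fin.isValue, Fin.zero_eta, Fin.mk_one, Matrix.of_apply]
  · exact hasDerivAt_const x 0
  · exact hasDerivAt_const x 1
  · exact hasDerivAt_const x _
  · have : HasDerivAt (fun y => (y - β n) / α n) (1 / α n) x := by
      simpa using ((hasDerivAt_id x).sub_const (β n)).div_const (α n)
    exact this

def Cder (α : ℤ → ℝ) : Mat2 := !![0, 0; 0, -2 / α 0]

lemma Cmat_hasDerivAt (α β : ℤ → ℝ) (N : ℕ) (x : ℝ) :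
    ∀ i j, HasDerivAt (fun y => Cmat α β N y i j) (Cder α i j) x := by
  intro i j
  fin_cases i <;> fin_cases j <;>
    simp only [Cmat, Cder, Matrix.cons_val', Matrix.cons_val_zero, Matrix.cons_val_one,
      Matrix.head_cons, Matrix.head_fin_const, Matrix.empty_val', Matrix.cons_val_fin_one,
      Fin.isValue, Fin.zero_eta, Fin.mk_one, Matrix.of_apply]
  · exact hasDerivAt_const x 0
  · exact hasDerivAt_const x (-1)
  · exact hasDerivAt_const x _
  · have : HasDerivAt (fun y => -(2 * y - β 0) / α 0) (-2 / α 0) x := by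
      have h1 : HasDerivAt (fun y : ℝ => 2 * y) 2 x := by
        simpa using (hasDerivAt_id x).const_mul (2:ℝ)
      simpa using ((h1.sub_const (β 0)).neg).div_const (α 0)
    exact this

lemma Tder_succ (α β : ℤ → ℝ) (x : ℝ) (n0 : ℤ) (m : ℕ) :
    Tder α β n0 (m+1) x =
      Bder α (n0 + m) * prodDZ (fun j => frakB α β j x) n0 m +
        frakB α β (n0 + m) x * Tder α β n0 m x := by
  rw [Tder, Finset.sum_range_succ, add_comm]
  congr 1
  · simp [prodDZ]
  · rw [Tder, Finset.mul_sum]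
    apply Finset.sum_congr rfl
    intro k hk
    have hk' : k < m := Finset.mem_range.mp hk
    rw [show m+1-1-k = (m-1-k)+1 by omega, prodDZ,
      show n0 + (k:ℤ) + 1 + ((m-1-k : ℕ):ℤ) = n0 + (m:ℤ) by omega]
    simp [mul_assoc]

lemma prodDZ_hasDerivAt (α β : ℤ → ℝ) (x : ℝ) :
    ∀ (len : ℕ) (n0 : ℤ) (i j : Fin 2),
      HasDerivAt (fun y => prodDZ (fun j' => frakB α β j' y) n0 len i j)
        (Tder α β n0 len x i j) x := by
  intro len
  induction len with
  | zero =>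
    intro n0 i j
    simpa [prodDZ, Tder] using hasDerivAt_const x ((1 : Mat2) i j)
  | succ m ih =>
    intro n0 i j
    have h := matmul_hasDerivAt (fun y => frakB α β (n0 + m) y)
      (fun y => prodDZ (fun j' => frakB α β j' y) n0 m)
      (Bder α (n0 + m)) (Tder α β n0 m x) x
      (frakB_hasDerivAt α β (n0 + m) x) (fun i j => ih n0 i j) i j
    rw [Tder_succ]
    exact h

lemma trace_calX_hasDerivAt (α β : ℤ → ℝ) (N : ℕ) (x : ℝ) :
    HasDerivAt (fun y => Matrix.trace (calX α β N 1 y))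
      (Matrix.trace (Cder α * prodDZ (fun j => frakB α β j x) 1 (N-1) +
        Cmat α β N x * Tder α β 1 (N-1) x)) x := by
  have hfun : (fun y => Matrix.trace (calX α β N 1 y)) =
      fun y => ∑ i : Fin 2, (Cmat α β N y * prodDZ (fun j => frakB α β j y) 1 (N-1)) i i := by
    funext y
    rw [calX, show (1:ℕ) - 1 = 0 from rfl]
    simp [prodDZ, Matrix.trace, Matrix.diag]
  have hE : Matrix.trace (Cder α * prodDZ (fun j => frakB α β j x) 1 (N-1) +
        Cmat α β N x * Tder α β 1 (N-1) x) =
      ∑ i : Fin 2, (Cder α * prodDZ (fun j => frakB α β j x) 1 (N-1) +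
        Cmat α β N x * Tder α β 1 (N-1) x) i i := by
    simp [Matrix.trace, Matrix.diag]
  rw [hfun, hE]
  exact HasDerivAt.fun_sum fun i _ =>
    matmul_hasDerivAt (fun y => Cmat α β N y)
      (fun y => prodDZ (fun j' => frakB α β j' y) 1 (N-1))
      (Cder α) (Tder α β 1 (N-1) x) x
      (Cmat_hasDerivAt α β N x) (prodDZ_hasDerivAt α β x (N-1) 1) i i

lemma traceA (α β : ℤ → ℝ) (hα : ∀ n, 0 < α n) (N : ℕ) (x : ℝ) :
    Matrix.trace (Cder α * prodDZ (fun j => frakB α β j x) 1 (N-1)) =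
      -2 * calX α β N N x 1 0 / α ((N:ℤ) - 1) := by
  set T := prodDZ (fun j => frakB α β j x) 1 (N-1) with hT
  have hcN : calX α β N N x 1 0 = T 1 1 * (α ((N:ℤ)-1) / α 0) := by
    rw [calX, Nat.sub_self]
    simp [prodDZ, Matrix.mul_apply, Fin.sum_univ_two, Cmat]
    left; rfl
  have htr : Matrix.trace (Cder α * T) = -2 / α 0 * T 1 1 := by
    rw [Matrix.trace_fin_two, Matrix.mul_apply, Matrix.mul_apply]
    simp [Fin.sum_univ_two, Cder]
  rw [htr, hcN]
  have h1 : α ((N:ℤ)-1) ≠ 0 := (hα _).ne'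
  have h2 : α 0 ≠ 0 := (hα _).ne'
  field_simp

lemma traceB_term (α β : ℤ → ℝ) (hα : ∀ n, 0 < α n) (N : ℕ) (x : ℝ) (k : ℕ) (hk : k < N - 1) :
    Matrix.trace (Cmat α β N x *
      (prodDZ (fun j => frakB α β j x) (1 + (k:ℤ) + 1) (N-1-1-k) * Bder α (1 + (k:ℤ)) *
        prodDZ (fun j => frakB α β j x) 1 k)) =
      - (calX α β N (k+1) x 1 0 / α (((k+1 : ℕ):ℤ) - 1)) := by
  set P := prodDZ (fun j => frakB α β j x) 1 k with hP
  set Q := prodDZ (fun j => frakB α β j x) (1 + (k:ℤ) + 1) (N-1-1-k) with hQ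
  set G := P * Cmat α β N x * Q with hG
  have hcyc : Matrix.trace (Cmat α β N x * (Q * Bder α (1 + (k:ℤ)) * P)) =
      Matrix.trace (G * Bder α (1 + (k:ℤ))) := by
    rw [show Cmat α β N x * (Q * Bder α (1 + (k:ℤ)) * P) =
      (Cmat α β N x * Q * Bder α (1 + (k:ℤ))) * P by simp [mul_assoc],
      Matrix.trace_mul_comm, hG]
    simp [mul_assoc]
  have htrG : Matrix.trace (G * Bder α (1 + (k:ℤ))) = G 1 1 / α (1 + (k:ℤ)) := by
    simp [Matrix.trace_fin_two, Matrix.mul_apply, Fin.sum_univ_two, Bder]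
    ring
  have hc : calX α β N (k+1) x 1 0 = G 1 1 * (-(α ((1 + (k:ℤ)) - 1)) / α (1 + (k:ℤ))) := by
    rw [calX, show (k+1) - 1 = k from rfl]
    have hsplit : prodDZ (fun j => frakB α β j x) ((k+1 : ℕ):ℤ) (N-(k+1)) =
        Q * frakB α β (1 + (k:ℤ)) x := by
      rw [show N - (k+1) = (N-1-1-k) + 1 by omega, prodDZ_bot, hQ]
      have e1 : ((k+1 : ℕ):ℤ) + 1 = 1 + (k:ℤ) + 1 := by push_cast; ring
      have e2 : ((k+1 : ℕ):ℤ) = 1 + (k:ℤ) := by push_cast; ring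
      rw [e1, e2]
    rw [hsplit, hG, ← hP]
    rw [show P * Cmat α β N x * (Q * frakB α β (1 + (k:ℤ)) x) =
      (P * Cmat α β N x * Q) * frakB α β (1 + (k:ℤ)) x by simp [mul_assoc]]
    simp [Matrix.mul_apply, Fin.sum_univ_two, frakB]
  rw [hcyc, htrG, hc]
  have e3 : ((k+1 : ℕ):ℤ) - 1 = (k:ℤ) := by push_cast; ring
  have e4 : (1:ℤ) + (k:ℤ) - 1 = (k:ℤ) := by ring
  rw [e3, e4]
  have h1 : α (1 + (k:ℤ)) ≠ 0 := (hα _).ne'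
  have h2 : α ((k:ℤ)) ≠ 0 := (hα _).ne'
  rw [e4] at hc
  field_simp

lemma traceB (α β : ℤ → ℝ) (hα : ∀ n, 0 < α n) (N : ℕ) (x : ℝ) :
    Matrix.trace (Cmat α β N x * Tder α β 1 (N-1) x) =
      -(∑ i ∈ Finset.Ico 1 N, calX α β N i x 1 0 / α ((i:ℤ)-1)) := by
  rw [Tder, Finset.mul_sum, Matrix.trace_sum, Finset.sum_Ico_eq_sum_range,
    ← Finset.sum_neg_distrib]
  apply Finset.sum_congr rfl
  intro k hk
  have hk' : k < N - 1 := Finset.mem_range.mp hk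
  have h := traceB_term α β hα N x k hk'
  simpa [add_comm] using h

/-- Corollary 6 of the paper. For `x` with `|tr 𝒳_1(x)| < 2`,
`∑_{i=1}^{N−1} |[𝒳_i(x)]_{2,1}|/α_{i−1} + 2|[𝒳_N(x)]_{2,1}|/α_{N−1} = |tr 𝒳_1'(x)|`. -/
theorem blend_entry_sum_eq_trace_deriv
    (N : ℕ) (hN : 1 ≤ N)
    (α β : ℤ → ℝ) (hα : ∀ n, 0 < α n)
    (hαper : ∀ n : ℤ, α (n + N) = α n) (hβper : ∀ n : ℤ, β (n + N) = β n) :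
    ∀ x : ℝ, |Matrix.trace (calX α β N 1 x)| < 2 →
      (∑ i ∈ Finset.Ico 1 N, |calX α β N i x 1 0| / α ((i : ℤ) - 1)) +
          2 * |calX α β N N x 1 0| / α ((N : ℤ) - 1) =
        |deriv (fun y => Matrix.trace (calX α β N 1 y)) x| := by
  intro x hx
  have hdet1 := det_calX_one α β N hN x hα
  have hd1 : (Matrix.trace (calX α β N 1 x))^2 < 4 * (calX α β N 1 x).det := by
    rw [hdet1]
    have h := abs_lt.mp hx
    nlinarith [h.1, h.2]
  have hchain := chain α β hα N x hd1
  have hderiv : deriv (fun y => Matrix.trace (calX α β N 1 y)) x =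
      -((∑ i ∈ Finset.Ico 1 N, calX α β N i x 1 0 / α ((i:ℤ)-1)) +
        2 * calX α β N N x 1 0 / α ((N:ℤ)-1)) := by
    rw [(trace_calX_hasDerivAt α β N x).deriv, Matrix.trace_add,
      traceA α β hα N x, traceB α β hα N x]
    ring
  rw [hderiv, abs_neg]
  have hc1 : ∀ i, 1 ≤ i → i ≤ N → 0 < calX α β N 1 x 1 0 * calX α β N i x 1 0 := by
    intro i h1 h2
    have h := (hchain (i-1) (by omega)).2
    rwa [show i - 1 + 1 = i by omega] at h
  have hc11 := hc1 1 le_rfl hN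
  have hne : calX α β N 1 x 1 0 ≠ 0 := by
    intro h; rw [h] at hc11; simp at hc11
  rcases hne.lt_or_gt with hneg | hpos
  · -- all entries negative
    have hnegall : ∀ i, 1 ≤ i → i ≤ N → calX α β N i x 1 0 < 0 := by
      intro i h1 h2
      have h := hc1 i h1 h2
      rcases mul_pos_iff.mp h with ⟨hh, _⟩ | ⟨_, hh⟩
      · linarith
      · exact hh
    have hSneg : (∑ i ∈ Finset.Ico 1 N, calX α β N i x 1 0 / α ((i:ℤ)-1)) +
        2 * calX α β N N x 1 0 / α ((N:ℤ)-1) < 0 := by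
      have h1 : (∑ i ∈ Finset.Ico 1 N, calX α β N i x 1 0 / α ((i:ℤ)-1)) ≤ 0 := by
        apply Finset.sum_nonpos
        intro i hi
        obtain ⟨ha, hb⟩ := Finset.mem_Ico.mp hi
        exact div_nonpos_of_nonpos_of_nonneg (hnegall i ha hb.le).le (hα _).le
      have h2 : 2 * calX α β N N x 1 0 / α ((N:ℤ)-1) < 0 :=
        div_neg_of_neg_of_pos (by linarith [hnegall N hN le_rfl]) (hα _)
      linarith
    rw [abs_of_neg hSneg]
    rw [show (∑ i ∈ Finset.Ico 1 N, |calX α β N i x 1 0| / α ((i:ℤ)-1)) =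
        ∑ i ∈ Finset.Ico 1 N, -(calX α β N i x 1 0) / α ((i:ℤ)-1) from
      Finset.sum_congr rfl fun i hi => by
        obtain ⟨ha, hb⟩ := Finset.mem_Ico.mp hi
        rw [abs_of_neg (hnegall i ha hb.le)]]
    rw [abs_of_neg (hnegall N hN le_rfl)]
    rw [show (∑ i ∈ Finset.Ico 1 N, -(calX α β N i x 1 0) / α ((i:ℤ)-1)) =
        -(∑ i ∈ Finset.Ico 1 N, calX α β N i x 1 0 / α ((i:ℤ)-1)) from by
      rw [← Finset.sum_neg_distrib]
      exact Finset.sum_congr rfl fun i _ => neg_div _ _]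
    ring
  · have hposall : ∀ i, 1 ≤ i → i ≤ N → 0 < calX α β N i x 1 0 := by
      intro i h1 h2
      have h := hc1 i h1 h2
      rcases mul_pos_iff.mp h with ⟨_, hh⟩ | ⟨hh, _⟩
      · exact hh
      · linarith
    have hSpos : 0 < (∑ i ∈ Finset.Ico 1 N, calX α β N i x 1 0 / α ((i:ℤ)-1)) +
        2 * calX α β N N x 1 0 / α ((N:ℤ)-1) := by
      have h1 : 0 ≤ (∑ i ∈ Finset.Ico 1 N, calX α β N i x 1 0 / α ((i:ℤ)-1)) := by
        apply Finset.sum_nonneg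
        intro i hi
        obtain ⟨ha, hb⟩ := Finset.mem_Ico.mp hi
        exact div_nonneg (hposall i ha hb.le).le (hα _).le
      have h2 : 0 < 2 * calX α β N N x 1 0 / α ((N:ℤ)-1) :=
        div_pos (by linarith [hposall N hN le_rfl]) (hα _)
      linarith
    rw [abs_of_pos hSpos]
    rw [show (∑ i ∈ Finset.Ico 1 N, |calX α β N i x 1 0| / α ((i:ℤ)-1)) =
        ∑ i ∈ Finset.Ico 1 N, calX α β N i x 1 0 / α ((i:ℤ)-1) from
      Finset.sum_congr rfl fun i hi => by
        obtain ⟨ha, hb⟩ := Finset.mem_Ico.mp hi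
        rw [abs_of_pos (hposall i ha hb.le)]]
    rw [abs_of_pos (hposall N hN le_rfl)]
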